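/- For q > 0 define the 2×2 complex matrices Ψ(q) = (1/√2)·[[q^{−1/4}, −i·q^{−1/4}], [q^{1/4}, i·q^{1/4}]], U'(q) = diag(√q, −√q), R₀(q) = Id, and for n ≥ 1, Rₙ(q) = q^{−n/2}·((2n−1)!!·(2n−3)!!/(n!·2^{4n}))·[[−1, 2n·i·(−1)^{n+1}], [2n·i, (−1)^{n+1}]]. Then for every n ≥ 0 and every q > 0: q·(dRₙ/dq)(q) + Ψ(q)^{−1}·(q·(dΨ/dq)(q))·Rₙ(q) = U'(q)·R_{n+1}(q) − R_{n+1}(q)·U'(q), where derivatives are taken entrywise in q. -/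

import Mathlib

open Matrix

/-- The odd double factorial `(2k−1)!! = (2k)!/(2ᵏ·k!)`, with `(−1)!! = 1`, as a complex
number. -/
noncomputable def oddDoubleFactorial (k : ℕ) : ℂ :=
  (Nat.factorial (2 * k) : ℂ) / (2 ^ k * (Nat.factorial k : ℂ))

/-- The transition matrix `Ψ(q)` between the flat and normalized canonical bases of the
non-equivariant quantum cohomology of ℙ¹. -/
noncomputable def PsiMat (q : ℝ) : Matrix (Fin 2) (Fin 2) ℂ :=
  ((Real.sqrt 2 : ℝ)⁻¹ : ℂ) •
    Matrix.of
      ![![((q ^ (-(1 / 4 : ℝ)) : ℝ) : ℂ), -Complex.I * ((q ^ (-(1 / 4 : ℝ)) : ℝ) : ℂ)],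
        ![((q ^ ((1 / 4 : ℝ)) : ℝ) : ℂ), Complex.I * ((q ^ ((1 / 4 : ℝ)) : ℝ) : ℂ)]]

/-- The matrix `U'(q) = q·dU/dq = diag(√q, −√q)` of derivatives of the canonical
coordinates of the quantum cohomology of ℙ¹. -/
noncomputable def UprimeMat (q : ℝ) : Matrix (Fin 2) (Fin 2) ℂ :=
  Matrix.of ![![((Real.sqrt q : ℝ) : ℂ), 0], ![0, -((Real.sqrt q : ℝ) : ℂ)]]

/-- The coefficients `Rₙ(q)` of Givental's R-matrix for the non-equivariant
Gromov-Witten theory of ℙ¹: `R₀ = Id` and for `n ≥ 1`,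
`Rₙ(q) = q^{−n/2}·((2n−1)!!(2n−3)!!/(n!·2^{4n}))·[[−1, 2n·i·(−1)^{n+1}],[2n·i, (−1)^{n+1}]]`. -/
noncomputable def RMat (n : ℕ) (q : ℝ) : Matrix (Fin 2) (Fin 2) ℂ :=
  if n = 0 then 1
  else
    (((q ^ (-(n : ℝ) / 2) : ℝ) : ℂ) *
        (oddDoubleFactorial n * oddDoubleFactorial (n - 1) /
          ((Nat.factorial n : ℂ) * 2 ^ (4 * n)))) •
      Matrix.of
        ![![-1, 2 * (n : ℂ) * Complex.I * (-1 : ℂ) ^ (n + 1)],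
          ![2 * (n : ℂ) * Complex.I, (-1 : ℂ) ^ (n + 1)]]

/-- Entrywise derivative in `q` of a matrix-valued function of a real variable. -/
noncomputable def matDeriv (M : ℝ → Matrix (Fin 2) (Fin 2) ℂ) (q : ℝ) :
    Matrix (Fin 2) (Fin 2) ℂ :=
  Matrix.of fun i j => deriv (fun t : ℝ => M t i j) q

noncomputable def PsiInv (q : ℝ) : Matrix (Fin 2) (Fin 2) ℂ :=
  ((Real.sqrt 2 : ℝ)⁻¹ : ℂ) •
    Matrix.of
      ![![((q ^ ((1 / 4 : ℝ)) : ℝ) : ℂ), ((q ^ (-(1 / 4 : ℝ)) : ℝ) : ℂ)],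
        ![Complex.I * ((q ^ ((1 / 4 : ℝ)) : ℝ) : ℂ), -Complex.I * ((q ^ (-(1 / 4 : ℝ)) : ℝ) : ℂ)]]

lemma hasDerivAt_rpowC {q : ℝ} (hq : 0 < q) (a : ℝ) :
    HasDerivAt (fun t : ℝ => ((t ^ a : ℝ) : ℂ)) ((a * q ^ (a - 1) : ℝ) : ℂ) q :=
  (Real.hasDerivAt_rpow_const (Or.inl hq.ne')).ofReal_comp

lemma psi_mul {q : ℝ} (hq : 0 < q) : PsiMat q * PsiInv q = 1 := by
  have hab : ((q ^ (-(1/4:ℝ)) : ℝ) : ℂ) * ((q ^ ((1/4:ℝ)) : ℝ) : ℂ) = 1 := by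
    rw [← Complex.ofReal_mul, ← Real.rpow_add hq]; norm_num
  have hs : (((Real.sqrt 2 : ℝ) : ℂ))⁻¹ * (((Real.sqrt 2 : ℝ) : ℂ))⁻¹ = 1/2 := by
    rw [← mul_inv, ← Complex.ofReal_mul, Real.mul_self_sqrt (by norm_num : (0:ℝ) ≤ 2)]
    norm_num
  have hi : Complex.I * Complex.I = -1 := Complex.I_mul_I
  set a := ((q ^ (-(1/4:ℝ)) : ℝ) : ℂ)
  set b := ((q ^ ((1/4:ℝ)) : ℝ) : ℂ)
  set s := (((Real.sqrt 2 : ℝ) : ℂ))⁻¹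
  ext i j
  fin_cases i <;> fin_cases j <;>
    simp only [PsiMat, PsiInv, Matrix.mul_apply, Fin.sum_univ_two, Matrix.smul_apply,
      Matrix.of_apply, Matrix.cons_val', Matrix.cons_val_zero, Matrix.cons_val_one,
      Matrix.head_cons, Matrix.head_fin_const, Matrix.one_apply, Matrix.empty_val',
      Matrix.cons_val_fin_one, smul_eq_mul, Fin.mk_zero, Fin.mk_one]
  · norm_num
    linear_combination 2*a*b*hs + hab - s*s*a*b*hi
  · norm_num
    linear_combination s*s*a*a*hi
  · norm_num
    linear_combination s*s*b*b*hi
  · norm_num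
    linear_combination 2*a*b*hs + hab - s*s*a*b*hi

lemma matDeriv_Psi {q : ℝ} (hq : 0 < q) : matDeriv PsiMat q =
    ((Real.sqrt 2 : ℝ)⁻¹ : ℂ) •
      Matrix.of
        ![![((-(1/4) * q ^ (-(1/4:ℝ) - 1) : ℝ) : ℂ),
            -Complex.I * ((-(1/4) * q ^ (-(1/4:ℝ) - 1) : ℝ) : ℂ)],
          ![(((1/4) * q ^ ((1/4:ℝ) - 1) : ℝ) : ℂ),
            Complex.I * (((1/4) * q ^ ((1/4:ℝ) - 1) : ℝ) : ℂ)]] := by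
  ext i j
  fin_cases i <;> fin_cases j <;>
    simp only [matDeriv, PsiMat, Matrix.smul_apply, Matrix.of_apply, Matrix.cons_val',
      Matrix.cons_val_zero, Matrix.cons_val_one, Matrix.head_cons, Matrix.head_fin_const,
      Matrix.empty_val', Matrix.cons_val_fin_one, smul_eq_mul, Fin.mk_zero, Fin.mk_one]
  · exact ((hasDerivAt_rpowC hq _).const_mul _).deriv
  · exact (((hasDerivAt_rpowC hq _).const_mul (-Complex.I)).const_mul _).deriv
  · exact ((hasDerivAt_rpowC hq _).const_mul _).deriv
  · exact (((hasDerivAt_rpowC hq _).const_mul Complex.I).const_mul _).deriv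

lemma psiTerm {q : ℝ} (hq : 0 < q) :
    PsiInv q * ((q : ℂ) • matDeriv PsiMat q) =
      Matrix.of ![![0, Complex.I/4], ![-Complex.I/4, 0]] := by
  rw [matDeriv_Psi hq]
  have hab : ((q ^ (-(1/4:ℝ)) : ℝ) : ℂ) * ((q ^ ((1/4:ℝ)) : ℝ) : ℂ) = 1 := by
    rw [← Complex.ofReal_mul, ← Real.rpow_add hq]; norm_num
  have hs : (((Real.sqrt 2 : ℝ) : ℂ))⁻¹ * (((Real.sqrt 2 : ℝ) : ℂ))⁻¹ = 1/2 := by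
    rw [← mul_inv, ← Complex.ofReal_mul, Real.mul_self_sqrt (by norm_num : (0:ℝ) ≤ 2)]
    norm_num
  have hi : Complex.I * Complex.I = -1 := Complex.I_mul_I
  have hA : (q : ℂ) * ((-(1/4) * q ^ (-(1/4:ℝ) - 1) : ℝ) : ℂ) =
      -(1/4) * ((q ^ (-(1/4:ℝ)) : ℝ) : ℂ) := by
    rw [← Complex.ofReal_mul]
    norm_cast
    rw [mul_comm (q:ℝ), mul_assoc, ← Real.rpow_add_one hq.ne']
    norm_num
  have hB : (q : ℂ) * (((1/4) * q ^ ((1/4:ℝ) - 1) : ℝ) : ℂ) =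
      (1/4) * ((q ^ ((1/4:ℝ)) : ℝ) : ℂ) := by
    rw [← Complex.ofReal_mul]
    norm_cast
    rw [mul_comm (q:ℝ), mul_assoc, ← Real.rpow_add_one hq.ne']
    norm_num
  set a := ((q ^ (-(1/4:ℝ)) : ℝ) : ℂ)
  set b := ((q ^ ((1/4:ℝ)) : ℝ) : ℂ)
  set s := (((Real.sqrt 2 : ℝ) : ℂ))⁻¹
  set i := Complex.I
  ext k l
  fin_cases k <;> fin_cases l <;>
    simp only [PsiInv, Matrix.mul_apply, Fin.sum_univ_two, Matrix.smul_apply,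
      Matrix.of_apply, Matrix.cons_val', Matrix.cons_val_zero, Matrix.cons_val_one,
      Matrix.head_cons, Matrix.head_fin_const, Matrix.empty_val',
      Matrix.cons_val_fin_one, smul_eq_mul, Fin.mk_zero, Fin.mk_one]
  · linear_combination s*s*b*hA + s*s*a*hB
  · linear_combination (-s*s*i*b)*hA + (s*s*i*a)*hB + (i*a*b/2)*hs + (i/4)*hab
  · linear_combination (s*s*i*b)*hA + (-s*s*i*a)*hB + (-(i*a*b)/2)*hs + (-(i/4))*hab
  · linear_combination (-s*s*i*i*b)*hA + (-s*s*i*i*a)*hB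

lemma matDeriv_R0 (q : ℝ) : matDeriv (RMat 0) q = 0 := by
  ext i j
  simp only [matDeriv, RMat, if_pos rfl, Matrix.of_apply, Matrix.one_apply]
  split_ifs <;> simp

lemma matDeriv_R (m : ℕ) {q : ℝ} (hq : 0 < q) :
    matDeriv (RMat (m + 1)) q =
      (((( -((m + 1 : ℕ) : ℝ) / 2) * q ^ (-((m + 1 : ℕ) : ℝ) / 2 - 1) : ℝ) : ℂ) *
          (oddDoubleFactorial (m + 1) * oddDoubleFactorial m /
            ((Nat.factorial (m + 1) : ℂ) * 2 ^ (4 * (m + 1))))) •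
        Matrix.of
          ![![-1, 2 * ((m + 1 : ℕ) : ℂ) * Complex.I * (-1 : ℂ) ^ ((m + 1) + 1)],
            ![2 * ((m + 1 : ℕ) : ℂ) * Complex.I, (-1 : ℂ) ^ ((m + 1) + 1)]] := by
  ext i j
  fin_cases i <;> fin_cases j <;>
    simp only [matDeriv, RMat, Nat.succ_ne_zero, if_false, Nat.add_sub_cancel,
      Matrix.smul_apply, Matrix.of_apply, Matrix.cons_val', Matrix.cons_val_zero,
      Matrix.cons_val_one, Matrix.head_cons, Matrix.head_fin_const, Matrix.empty_val',
      Matrix.cons_val_fin_one, smul_eq_mul, Fin.mk_zero, Fin.mk_one] <;>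
    exact (((hasDerivAt_rpowC hq _).mul_const _).mul_const _).deriv

lemma odf_succ (k : ℕ) :
    oddDoubleFactorial (k + 1) = (2 * (k : ℂ) + 1) * oddDoubleFactorial k := by
  simp only [oddDoubleFactorial]
  have e1 : 2 * (k + 1) = (2 * k) + 1 + 1 := by ring
  rw [e1, Nat.factorial_succ, Nat.factorial_succ, Nat.factorial_succ, pow_succ]
  have hk : (Nat.factorial k : ℂ) ≠ 0 := Nat.cast_ne_zero.2 (Nat.factorial_pos k).ne'
  have h2 : (2 : ℂ) ^ k ≠ 0 := pow_ne_zero _ two_ne_zero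
  have hk1 : ((k : ℂ) + 1) ≠ 0 := by
    have : ((k + 1 : ℕ) : ℂ) ≠ 0 := Nat.cast_ne_zero.2 (Nat.succ_ne_zero k)
    push_cast at this; exact this
  push_cast
  field_simp
  ring


set_option maxHeartbeats 1000000 in
/-- The defining recursion `(d + Ψ⁻¹dΨ)Rₙ = [dU, R_{n+1}]` (in the `t¹`-direction, with
`q·d/dq = d/dt¹`) for Givental's R-matrix of the non-equivariant Gromov-Witten theory
of ℙ¹. -/
theorem givental_R_matrix_recursion :
    ∀ n : ℕ, ∀ q : ℝ, 0 < q →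
      (q : ℂ) • matDeriv (RMat n) q +
          (PsiMat q)⁻¹ * ((q : ℂ) • matDeriv PsiMat q) * RMat n q =
        UprimeMat q * RMat (n + 1) q - RMat (n + 1) q * UprimeMat q := by
  intro n q hq
  rcases n with _ | m
  · -- n = 0
    rw [Matrix.inv_eq_right_inv (psi_mul hq), matDeriv_R0, psiTerm hq]
    simp only [RMat, Nat.succ_ne_zero, if_false, if_pos rfl]
    set A := ((q ^ (-((0+1 : ℕ) : ℝ) / 2) : ℝ) : ℂ) with hA
    have hkey : ((Real.sqrt q : ℝ) : ℂ) * A = 1 := by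
      rw [hA, ← Complex.ofReal_mul, Real.sqrt_eq_rpow, ← Real.rpow_add hq]
      norm_num
    ext i j
    fin_cases i <;> fin_cases j <;>
      simp only [UprimeMat, Matrix.mul_apply,
        Fin.sum_univ_two, Matrix.smul_apply, Matrix.of_apply, Matrix.cons_val',
        Matrix.cons_val_zero, Matrix.cons_val_one, Matrix.head_cons, Matrix.head_fin_const,
        Matrix.empty_val', Matrix.cons_val_fin_one, smul_eq_mul, Fin.mk_zero, Fin.mk_one,
        Matrix.one_apply, Matrix.add_apply, Matrix.sub_apply, Matrix.smul_apply] <;>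
      norm_num [oddDoubleFactorial, Nat.factorial] <;>
      first
        | linear_combination (Complex.I/4) * hkey
        | linear_combination (-(Complex.I/4)) * hkey
        | linear_combination (Complex.I/2) * hkey
        | linear_combination (-(Complex.I/2)) * hkey
        | ring_nf
  · -- n = m + 1
    rw [Matrix.inv_eq_right_inv (psi_mul hq), matDeriv_R m hq, psiTerm hq]
    simp only [RMat, Nat.succ_ne_zero, if_false, Nat.add_sub_cancel]
    have hqc : (q : ℂ) ≠ 0 := by exact_mod_cast hq.ne'
    set A := ((q ^ (-((m+1 : ℕ) : ℝ) / 2) : ℝ) : ℂ) with hA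
    set B := ((q ^ (-((m+1+1 : ℕ) : ℝ) / 2) : ℝ) : ℂ) with hB
    set D := ((( -((m + 1 : ℕ) : ℝ) / 2) * q ^ (-((m + 1 : ℕ) : ℝ) / 2 - 1) : ℝ) : ℂ) with hDdef
    set K1 := oddDoubleFactorial (m+1) * oddDoubleFactorial m /
        ((Nat.factorial (m+1) : ℂ) * 2 ^ (4 * (m+1))) with hK1
    set K2 := oddDoubleFactorial (m+1+1) * oddDoubleFactorial (m+1) /
        ((Nat.factorial (m+1+1) : ℂ) * 2 ^ (4 * (m+1+1))) with hK2
    have hi : Complex.I * Complex.I = -1 := Complex.I_mul_I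
    have hqD : (q : ℂ) * D = -(((m : ℂ) + 1) / 2) * A := by
      rw [hDdef, hA]
      push_cast [Real.rpow_sub hq, Real.rpow_one]
      field_simp
    have hsB : ((Real.sqrt q : ℝ) : ℂ) * B = A := by
      rw [hB, hA, ← Complex.ofReal_mul, Real.sqrt_eq_rpow, ← Real.rpow_add hq]
      rw [show (1:ℝ)/2 + -((m+1+1 : ℕ) : ℝ)/2 = -((m+1 : ℕ) : ℝ)/2 by push_cast; ring]
    have hfac : (Nat.factorial (m+1) : ℂ) ≠ 0 := Nat.cast_ne_zero.2 (Nat.factorial_pos _).ne'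
    have hfac2 : (Nat.factorial (m+1+1) : ℂ) = ((m : ℂ) + 2) * (Nat.factorial (m+1) : ℂ) := by
      rw [Nat.factorial_succ]; push_cast; ring
    have hpow : (2 : ℂ) ^ (4 * (m+1+1)) = 2 ^ (4 * (m+1)) * 16 := by
      rw [show 4*(m+1+1) = 4*(m+1) + 4 by ring, pow_add]; norm_num
    have hp2 : (2 : ℂ) ^ (4 * (m+1)) ≠ 0 := pow_ne_zero _ two_ne_zero
    have hm2 : ((m : ℂ) + 2) ≠ 0 := by
      have : ((m + 2 : ℕ) : ℂ) ≠ 0 := Nat.cast_ne_zero.2 (by omega)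
      push_cast at this; exact this
    have hK : ((m : ℂ) + 1) ^ 2 * K1 - K1 / 4 = 4 * ((m : ℂ) + 2) * K2 := by
      rw [hK1, hK2, odf_succ (m+1), odf_succ m, hfac2, hpow]
      field_simp
      push_cast
      ring
    ext i j
    fin_cases i <;> fin_cases j <;>
      simp only [UprimeMat, Matrix.mul_apply, Fin.sum_univ_two, Matrix.smul_apply,
        Matrix.of_apply, Matrix.cons_val', Matrix.cons_val_zero, Matrix.cons_val_one,
        Matrix.head_cons, Matrix.head_fin_const, Matrix.empty_val', Matrix.cons_val_fin_one,
        smul_eq_mul, Fin.mk_zero, Fin.mk_one, Matrix.add_apply, Matrix.sub_apply] <;>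
      push_cast
    · linear_combination (-K1) * hqD + (((m:ℂ)+1) * A * K1 / 2) * hi
    · linear_combination (2*((m:ℂ)+1)*Complex.I*(-1:ℂ)^(m+1+1)*K1) * hqD
        + (-(Complex.I)*(-1:ℂ)^(m+1+1)*A) * hK
        + (-(4*((m:ℂ)+2)*Complex.I*(-1:ℂ)^(m+1+1+1)*K2)) * hsB
    · linear_combination (2*((m:ℂ)+1)*Complex.I*K1) * hqD
        + (-(Complex.I)*A) * hK
        + (4*((m:ℂ)+2)*Complex.I*K2) * hsB
    · linear_combination (K1*(-1:ℂ)^(m+1+1)) * hqD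
        + (-(((m:ℂ)+1)*A*K1*(-1:ℂ)^(m+1+1)/2)) * hi
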